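/- arXiv:2107.02570 — 2 statements merged into one kernel-verified Lean document; each statement's English description precedes it below -/
import Mathlib

section
/- The range space (𝒟, H_=) has constant (finite) VC dimension: there exists n₀ ∈ ℕ such that every finite set of closed disks shattered by H_= = {𝒟(h_=) : h a circle} has cardinality at most n₀. -/
noncomputable section

/-- The ground set `𝒟` of closed disks in the plane: pairs `(center, radius)`
with radius `≥ 0`. -/
def Ddisks : Set (EuclideanSpace ℝ (Fin 2) × ℝ) := {d | 0 ≤ d.2}

/-- `𝒟(h_≥)` for the circle `h = (q, s)`. -/
def Dge (q : EuclideanSpace ℝ (Fin 2)) (s : ℝ) : Set (EuclideanSpace ℝ (Fin 2) × ℝ) :=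
  {d | d ∈ Ddisks ∧ s ≤ dist d.1 q + d.2}

/-- `𝒟(h_≤)` for the circle `h = (q, s)`. -/
def Dle (q : EuclideanSpace ℝ (Fin 2)) (s : ℝ) : Set (EuclideanSpace ℝ (Fin 2) × ℝ) :=
  {d | d ∈ Ddisks ∧ dist d.1 q - d.2 ≤ s}

/-- `𝒟(h_=) = 𝒟(h_≤) ∩ 𝒟(h_≥)`: the disks intersecting the boundary circle of `h`. -/
def Deq (q : EuclideanSpace ℝ (Fin 2)) (s : ℝ) : Set (EuclideanSpace ℝ (Fin 2) × ℝ) :=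
  Dle q s ∩ Dge q s

/-- The family `H_= = {𝒟(h_=) : h a circle}`. -/
def Heq : Set (Set (EuclideanSpace ℝ (Fin 2) × ℝ)) :=
  {f | ∃ q s, 0 < s ∧ f = Deq q s}

/-- A family `F` of subsets of a ground set shatters `Y` if every subset of `Y` is
cut out by some member of `F`. -/
def Shatters {X : Type*} (F : Set (Set X)) (Y : Set X) : Prop :=
  ∀ S ⊆ Y, ∃ f ∈ F, f ∩ Y = S

abbrev E2' := EuclideanSpace ℝ (Fin 2)
def dot5 (v w : Fin 5 → ℝ) : ℝ := ∑ i, v i * w i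
def vv1 (p : E2') (r : ℝ) : Fin 5 → ℝ := ![-2*p 0, -2*p 1, -2*r, 1, ‖p‖^2 - r^2]
def vv2 (r : ℝ) : Fin 5 → ℝ := ![0, 0, 1, 0, -r]
def vv3 (p : E2') (r : ℝ) : Fin 5 → ℝ := ![2*p 0, 2*p 1, -2*r, -1, r^2 - ‖p‖^2]
def ww (q : E2') (s : ℝ) : Fin 5 → ℝ := ![q 0, q 1, s, ‖q‖^2 - s^2, 1]
def vecOf (a : (E2' × ℝ) × Fin 3) : Fin 5 → ℝ :=
  ![vv1 a.1.1 a.1.2, vv2 a.1.2, vv3 a.1.1 a.1.2] a.2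

lemma dist_sq' (p q : E2') : dist p q ^ 2 = ‖p‖^2 - 2*(p 0 * q 0 + p 1 * q 1) + ‖q‖^2 := by
  rw [dist_eq_norm, norm_sub_sq_real]
  simp [PiLp.inner_apply, Fin.sum_univ_two, RCLike.inner_apply]; ring

lemma dot1_eq (p : E2') (r : ℝ) (q : E2') (s : ℝ) :
    dot5 (vv1 p r) (ww q s) = dist p q ^ 2 - (s + r)^2 := by
  simp [dot5, vv1, ww, Fin.sum_univ_five, dist_sq']; ring

lemma dot2_eq (r : ℝ) (q : E2') (s : ℝ) : dot5 (vv2 r) (ww q s) = s - r := by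
  simp [dot5, vv2, ww, Fin.sum_univ_five]; ring

lemma dot3_eq (p : E2') (r : ℝ) (q : E2') (s : ℝ) :
    dot5 (vv3 p r) (ww q s) = (s - r)^2 - dist p q ^ 2 := by
  simp [dot5, vv3, ww, Fin.sum_univ_five, dist_sq']; ring

lemma mem_Deq_iff {p : E2'} {r : ℝ} (hr : 0 ≤ r) (q : E2') {s : ℝ} (hs : 0 < s) :
    (p, r) ∈ Deq q s ↔
      (dot5 (vv1 p r) (ww q s) ≤ 0 ∧
        (dot5 (vv2 r) (ww q s) ≤ 0 ∨ dot5 (vv3 p r) (ww q s) ≤ 0)) := by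
  rw [dot1_eq, dot2_eq, dot3_eq]
  have hd : 0 ≤ dist p q := dist_nonneg
  constructor
  · rintro ⟨⟨-, h1⟩, ⟨-, h2⟩⟩
    refine ⟨by nlinarith, ?_⟩
    by_cases hsr : s ≤ r
    · left; linarith
    · right; nlinarith
  · rintro ⟨h1, h2⟩
    refine ⟨⟨hr, by nlinarith⟩, ⟨hr, ?_⟩⟩
    rcases h2 with h2 | h2
    · linarith
    · nlinarith

lemma dot5_lin {α : Type*} (T : Finset α) (c : α → ℝ) (ν : α → (Fin 5 → ℝ)) (w : Fin 5 → ℝ) :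
    ∑ a ∈ T, c a * dot5 (ν a) w = dot5 (∑ a ∈ T, c a • ν a) w := by
  simp only [dot5, Finset.sum_apply, Pi.smul_apply, smul_eq_mul, Finset.mul_sum, Finset.sum_mul]
  rw [Finset.sum_comm]
  exact Finset.sum_congr rfl fun i _ => Finset.sum_congr rfl fun a _ => by ring

lemma no_shatter_six {α : Type*} [DecidableEq α] (ν : α → (Fin 5 → ℝ)) (G : Finset α)
    (𝒜 : Finset (Finset α))
    (h𝒜 : ∀ u ∈ 𝒜, ∃ w, u = G.filter (fun a => dot5 (ν a) w ≤ 0))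
    {T : Finset α} (hT : 𝒜.Shatters T) : T.card ≤ 5 := by
  by_contra hcard
  push_neg at hcard
  obtain ⟨T6, hT6sub, hT6card⟩ := Finset.exists_subset_card_eq (show 6 ≤ T.card by omega)
  have hT6 : 𝒜.Shatters T6 := hT.mono_right hT6sub
  clear hT hcard hT6sub
  have hTG : T6 ⊆ G := by
    obtain ⟨u, hu, huT⟩ := hT6.exists_superset
    obtain ⟨w, rfl⟩ := h𝒜 u hu
    exact huT.trans (Finset.filter_subset _ _)
  have inner : ∀ c : α → ℝ, (∑ a ∈ T6, c a • ν a = 0) → (∃ a ∈ T6, 0 < c a) → False := by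
    intro c hsum ⟨a₀, ha₀T, ha₀⟩
    obtain ⟨u, hu, huS⟩ := hT6 (Finset.filter_subset (fun a => c a < 0) T6)
    obtain ⟨w, rfl⟩ := h𝒜 u hu
    have key : ∀ a ∈ T6, (dot5 (ν a) w ≤ 0 ↔ c a < 0) := by
      intro a ha
      constructor
      · intro hle
        have : a ∈ T6 ∩ Finset.filter (fun a => dot5 (ν a) w ≤ 0) G :=
          Finset.mem_inter.2 ⟨ha, Finset.mem_filter.2 ⟨hTG ha, hle⟩⟩
        rw [huS] at this
        exact (Finset.mem_filter.1 this).2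
      · intro hca
        have : a ∈ Finset.filter (fun a => c a < 0) T6 := Finset.mem_filter.2 ⟨ha, hca⟩
        rw [← huS] at this
        exact (Finset.mem_filter.1 (Finset.mem_inter.1 this).2).2
    have hzero : ∑ a ∈ T6, c a * dot5 (ν a) w = 0 := by
      rw [dot5_lin, hsum]; simp [dot5]
    have hnonneg : ∀ a ∈ T6, 0 ≤ c a * dot5 (ν a) w := by
      intro a ha
      by_cases h2 : dot5 (ν a) w ≤ 0
      · nlinarith [(key a ha).1 h2]
      · have hc : ¬ c a < 0 := fun hc => h2 ((key a ha).2 hc)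
        push_neg at h2 hc
        exact mul_nonneg hc h2.le
    have hpos : 0 < c a₀ * dot5 (ν a₀) w := by
      have : ¬ (dot5 (ν a₀) w ≤ 0) := fun hh => absurd ((key a₀ ha₀T).1 hh) (by linarith)
      exact mul_pos ha₀ (not_le.1 this)
    have := Finset.sum_pos' hnonneg ⟨a₀, ha₀T, hpos⟩
    rw [hzero] at this; exact lt_irrefl 0 this
  by_cases hinj : Set.InjOn ν ↑T6
  · have hVcard : (T6.image ν).card = 6 := by rw [Finset.card_image_of_injOn hinj, hT6card]
    have hlt : Module.finrank ℝ (Fin 5 → ℝ) < (T6.image ν).card := by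
      rw [hVcard, Module.finrank_fin_fun]; norm_num
    obtain ⟨f, hfsum, v₀, hv₀V, hfv₀⟩ :=
      Module.exists_nontrivial_relation_of_finrank_lt_card hlt
    rw [Finset.sum_image (fun x hx y hy h => hinj hx hy h)] at hfsum
    obtain ⟨a₀, ha₀T, ha₀v⟩ := Finset.mem_image.1 hv₀V
    rcases (hfv₀.lt_or_gt) with hneg | hpos
    · refine inner (fun a => -(f (ν a))) ?_
        ⟨a₀, ha₀T, show 0 < -(f (ν a₀)) by rw [ha₀v]; linarith⟩
      simp only [neg_smul, Finset.sum_neg_distrib, hfsum, neg_zero]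
    · exact inner (fun a => f (ν a)) hfsum
        ⟨a₀, ha₀T, show 0 < f (ν a₀) by rw [ha₀v]; exact hpos⟩
  · rw [Set.InjOn] at hinj
    push_neg at hinj
    obtain ⟨a, haT, b, hbT, hab, hne⟩ := hinj
    obtain ⟨u, hu, huS⟩ := hT6 (Finset.singleton_subset_iff.2 (by exact_mod_cast haT))
    obtain ⟨w, rfl⟩ := h𝒜 u hu
    have haU : a ∈ T6 ∩ Finset.filter (fun x => dot5 (ν x) w ≤ 0) G := by
      rw [huS]; exact Finset.mem_singleton_self a
    have hale : dot5 (ν a) w ≤ 0 := (Finset.mem_filter.1 (Finset.mem_inter.1 haU).2).2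
    have hbU : b ∈ T6 ∩ Finset.filter (fun x => dot5 (ν x) w ≤ 0) G := by
      refine Finset.mem_inter.2 ⟨by exact_mod_cast hbT,
        Finset.mem_filter.2 ⟨hTG (by exact_mod_cast hbT), ?_⟩⟩
      rw [← hab]; exact hale
    rw [huS, Finset.mem_singleton] at hbU
    exact hne hbU.symm

lemma growth_bound {n : ℕ} (h : 2 ^ n ≤ 6 * (3 * n + 1) ^ 5) : n ≤ 499 := by
  by_contra hn
  push_neg at hn
  have key : ∀ m, 500 ≤ m → 6 * (3 * m + 1) ^ 5 < 2 ^ m := by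
    intro m hm
    induction m, hm using Nat.le_induction with
    | base =>
      norm_num
      exact Nat.lt_of_lt_of_le (by norm_num : 45714577635045006 < 2 ^ 60)
        (Nat.pow_le_pow_right (by norm_num) (by norm_num))
    | succ m hm ih =>
        have hk : 1023 ≤ 3 * m + 1 := by omega
        set k := 3 * m + 1 with hkdef
        have h1 : k ^ 3 ≤ k ^ 4 := Nat.pow_le_pow_right (by omega) (by omega)
        have h2 : k ^ 2 ≤ k ^ 4 := Nat.pow_le_pow_right (by omega) (by omega)
        have h3 : k ≤ k ^ 4 := by nlinarith
        have h4 : 1 ≤ k ^ 4 := Nat.one_le_pow _ _ (by omega)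
        have h5 : 1023 * k ^ 4 ≤ k ^ 5 := by
          calc 1023 * k ^ 4 ≤ k * k ^ 4 := Nat.mul_le_mul_right _ hk
          _ = k ^ 5 := by ring
        have hstep : (3 * (m + 1) + 1) ^ 5 ≤ 2 * k ^ 5 := by
          have he : 3 * (m + 1) + 1 = k + 3 := by omega
          rw [he]
          have hexp : (k + 3) ^ 5 =
              k ^ 5 + 15 * k ^ 4 + 90 * k ^ 3 + 270 * k ^ 2 + 405 * k + 243 := by ring
          rw [hexp]
          nlinarith
        calc 6 * (3 * (m + 1) + 1) ^ 5 ≤ 2 * (6 * k ^ 5) := by omega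
        _ < 2 * 2 ^ m := by omega
        _ = 2 ^ (m + 1) := by ring
  exact absurd h (not_le.2 (key n hn))


/-- The range space `(𝒟, H_=)` has constant (finite) VC dimension:
there is `n₀ ∈ ℕ` such that every finite set of closed disks shattered by `H_=` has
cardinality at most `n₀`. -/
theorem vc_dim_Heq_finite :
    ∃ n₀ : ℕ, ∀ Y ⊆ Ddisks, Y.Finite → Shatters Heq Y → Y.ncard ≤ n₀ := by
  classical
  refine ⟨499, fun Y hY hfin hshat => ?_⟩
  set Z := hfin.toFinset with hZdef
  have hZY : ↑Z = Y := hfin.coe_toFinset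
  set n := Z.card with hndef
  have hny : Y.ncard = n := by rw [← hZY, Set.ncard_coe_finset]
  rw [hny]
  set G : Finset ((E2' × ℝ) × Fin 3) := Z ×ˢ Finset.univ with hGdef
  set 𝒜 : Finset (Finset ((E2' × ℝ) × Fin 3)) :=
    G.powerset.filter (fun u => ∃ w, u = G.filter fun a => dot5 (vecOf a) w ≤ 0) with h𝒜def
  have h𝒜mem : ∀ u ∈ 𝒜, ∃ w, u = G.filter (fun a => dot5 (vecOf a) w ≤ 0) :=
    fun u hu => (Finset.mem_filter.1 hu).2
  -- choose witnesses for each subset of Z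
  have hch : ∀ S ∈ Z.powerset, ∃ w : Fin 5 → ℝ, ∀ d ∈ Z,
      (d ∈ S ↔ (dot5 (vv1 d.1 d.2) w ≤ 0 ∧
        (dot5 (vv2 d.2) w ≤ 0 ∨ dot5 (vv3 d.1 d.2) w ≤ 0))) := by
    intro S hS
    have hSZ : S ⊆ Z := Finset.mem_powerset.1 hS
    have hSY : ↑S ⊆ Y := by rw [← hZY]; exact_mod_cast hSZ
    obtain ⟨f, ⟨q, s, hs, rfl⟩, hfY⟩ := hshat ↑S hSY
    refine ⟨ww q s, fun d hd => ?_⟩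
    have hdY : d ∈ Y := hZY ▸ (Finset.mem_coe.2 hd)
    have hr : 0 ≤ d.2 := hY hdY
    have hmem : d ∈ S ↔ d ∈ Deq q s := by
      constructor
      · intro h
        have : d ∈ (↑S : Set (E2' × ℝ)) := Finset.mem_coe.2 h
        rw [← hfY] at this
        exact this.1
      · intro h
        have : d ∈ Deq q s ∩ Y := ⟨h, hdY⟩
        rw [hfY] at this
        exact Finset.mem_coe.1 this
    rw [hmem]
    have := mem_Deq_iff (p := d.1) (r := d.2) hr q hs
    rwa [show (d.1, d.2) = d from rfl] at this
  choose wit hwit using hch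
  set F : Finset (E2' × ℝ) → Finset ((E2' × ℝ) × Fin 3) := fun S =>
    if h : S ∈ Z.powerset then G.filter (fun a => dot5 (vecOf a) (wit S h) ≤ 0) else ∅
    with hFdef
  have hmaps : ∀ S ∈ Z.powerset, F S ∈ 𝒜 := by
    intro S hS
    rw [hFdef]
    simp only [dif_pos hS]
    exact Finset.mem_filter.2 ⟨Finset.mem_powerset.2 (Finset.filter_subset _ _), ⟨wit S hS, rfl⟩⟩
  have hrecover : ∀ S, (hS : S ∈ Z.powerset) → ∀ d ∈ Z,
      (d ∈ S ↔ ((d, (0 : Fin 3)) ∈ F S ∧ (((d, (1 : Fin 3)) ∈ F S) ∨ ((d, (2 : Fin 3)) ∈ F S)))) := by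
    intro S hS d hd
    have hg : ∀ j : Fin 3, (d, j) ∈ G := by
      intro j; rw [hGdef]; exact Finset.mem_product.2 ⟨hd, Finset.mem_univ _⟩
    rw [hFdef]
    simp only [dif_pos hS, Finset.mem_filter]
    have e0 : vecOf (d, (0 : Fin 3)) = vv1 d.1 d.2 := rfl
    have e1 : vecOf (d, (1 : Fin 3)) = vv2 d.2 := rfl
    have e2 : vecOf (d, (2 : Fin 3)) = vv3 d.1 d.2 := rfl
    rw [hwit S hS d hd]
    simp [hg, e0, e1, e2]
  have hinj : Set.InjOn F ↑Z.powerset := by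
    intro S₁ hS₁ S₂ hS₂ hFeq
    have hS₁' : S₁ ∈ Z.powerset := hS₁
    have hS₂' : S₂ ∈ Z.powerset := hS₂
    apply Finset.ext
    intro d
    constructor
    · intro h
      have hd : d ∈ Z := Finset.mem_powerset.1 hS₁' h
      exact (hrecover S₂ hS₂' d hd).2 (hFeq ▸ (hrecover S₁ hS₁' d hd).1 h)
    · intro h
      have hd : d ∈ Z := Finset.mem_powerset.1 hS₂' h
      exact (hrecover S₁ hS₁' d hd).2 (hFeq ▸ (hrecover S₂ hS₂' d hd).1 h)
  have hcard1 : 2 ^ n ≤ 𝒜.card := by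
    rw [← Finset.card_powerset]
    exact Finset.card_le_card_of_injOn F hmaps hinj
  -- bound |𝒜|
  have hGcard : G.card = 3 * n := by
    rw [hGdef, Finset.card_product, Finset.card_univ]
    simp [hndef, Nat.mul_comm]
  have hshatbound : 𝒜.shatterer ⊆ (Finset.range 6).biUnion (fun i => G.powersetCard i) := by
    intro t ht
    rw [Finset.mem_shatterer] at ht
    have htcard : t.card ≤ 5 := no_shatter_six vecOf G 𝒜 h𝒜mem ht
    have htG : t ⊆ G := by
      obtain ⟨u, hu, hut⟩ := ht.exists_superset
      obtain ⟨w, rfl⟩ := h𝒜mem u hu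
      exact hut.trans (Finset.filter_subset _ _)
    exact Finset.mem_biUnion.2 ⟨t.card, Finset.mem_range.2 (by omega),
      (Finset.mem_powersetCard).2 ⟨htG, rfl⟩⟩
  have hcard2 : 𝒜.card ≤ ∑ i ∈ Finset.range 6, (3 * n).choose i := by
    calc 𝒜.card ≤ 𝒜.shatterer.card := Finset.card_le_card_shatterer 𝒜
    _ ≤ ((Finset.range 6).biUnion (fun i => G.powersetCard i)).card :=
        Finset.card_le_card hshatbound
    _ ≤ ∑ i ∈ Finset.range 6, (G.powersetCard i).card := Finset.card_biUnion_le
    _ = ∑ i ∈ Finset.range 6, (3 * n).choose i := by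
        simp [Finset.card_powersetCard, hGcard]
  have hcard3 : ∑ i ∈ Finset.range 6, (3 * n).choose i ≤ 6 * (3 * n + 1) ^ 5 := by
    have hterm : ∀ i ∈ Finset.range 6, (3 * n).choose i ≤ (3 * n + 1) ^ 5 := by
      intro i hi
      calc (3 * n).choose i ≤ (3 * n) ^ i := Nat.choose_le_pow _ _
      _ ≤ (3 * n + 1) ^ i := Nat.pow_le_pow_left (by omega) _
      _ ≤ (3 * n + 1) ^ 5 := Nat.pow_le_pow_right (by omega)
          (by exact Nat.lt_succ_iff.1 (Finset.mem_range.1 hi))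
    calc ∑ i ∈ Finset.range 6, (3 * n).choose i
        ≤ ∑ _i ∈ Finset.range 6, (3 * n + 1) ^ 5 := Finset.sum_le_sum hterm
    _ = 6 * (3 * n + 1) ^ 5 := by simp [Finset.sum_const, Finset.card_range]
  exact growth_bound (le_trans hcard1 (le_trans hcard2 hcard3))
end
end

section
/- There exists a constant C > 0 such that for every integer l ≥ 1 the following holds: let H_l = {f₁ ∩ ⋯ ∩ f_l : f₁, …, f_l ∈ H_≤ ∪ H_≥ ∪ H_=}. Then every finite set of closed disks that is shattered by H_l has cardinality at most C · l · log(l + 1); i.e., the range space (𝒟, H_l) has VC dimension O(l log l). -/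
noncomputable section

/-- The family `H_≥ = {𝒟(h_≥) : h a circle}`. -/
def Hge : Set (Set (EuclideanSpace ℝ (Fin 2) × ℝ)) :=
  {f | ∃ q s, 0 < s ∧ f = Dge q s}

/-- The family `H_≤ = {𝒟(h_≤) : h a circle}`. -/
def Hle : Set (Set (EuclideanSpace ℝ (Fin 2) × ℝ)) :=
  {f | ∃ q s, 0 < s ∧ f = Dle q s}

/-- `H_l`: intersections of `l` classifiers from a family `F`. -/
def InterFamily {X : Type*} (F : Set (Set X)) (l : ℕ) : Set (Set X) :=
  {f | ∃ g : Fin l → Set X, (∀ i, g i ∈ F) ∧ f = ⋂ i, g i}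

namespace VCAux

open Finset
open scoped Classical

abbrev Pt := EuclideanSpace ℝ (Fin 2)
abbrev XX := Pt × ℝ

/-- the lifting map into `ℝ⁵`. -/
def phi (d : XX) : Fin 5 → ℝ := ![d.1 0 ^ 2 + d.1 1 ^ 2 - d.2 ^ 2, d.1 0, d.1 1, d.2, 1]

/-- homogeneous linear threshold sets in the lifted space -/
def Gset (w : Fin 5 → ℝ) : Set XX := {d | ∑ j, w j * phi d j ≤ 0}

def wle (q : Pt) (s : ℝ) : Fin 5 → ℝ := ![1, -2*q 0, -2*q 1, -2*s, q 0^2 + q 1^2 - s^2]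
def wa (s : ℝ) : Fin 5 → ℝ := ![0, 0, 0, -1, s]
def wb (q : Pt) (s : ℝ) : Fin 5 → ℝ := ![-1, 2*q 0, 2*q 1, -2*s, s^2 - q 0^2 - q 1^2]

lemma dist_sq (p q : Pt) : dist p q ^ 2 = (p 0 - q 0) ^ 2 + (p 1 - q 1) ^ 2 := by
  rw [EuclideanSpace.dist_eq, Real.sq_sqrt (by positivity)]
  simp [Fin.sum_univ_two, Real.dist_eq, sq_abs]

lemma mem_Dle_iff {q : Pt} {s : ℝ} (hs : 0 < s) {d : XX} (hd : d ∈ Ddisks) :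
    d ∈ Dle q s ↔ d ∈ Gset (wle q s) := by
  have hds := dist_sq d.1 q
  have hdn : 0 ≤ dist d.1 q := dist_nonneg
  have hr : 0 ≤ d.2 := hd
  simp only [Dle, Gset, Set.mem_setOf_eq, Fin.sum_univ_five, wle, phi,
    Matrix.cons_val_zero, Matrix.cons_val_one, Matrix.head_cons, Matrix.cons_val_two,
    Matrix.tail_cons, Matrix.cons_val_three, Matrix.cons_val_four]
  constructor
  · rintro ⟨-, h⟩
    nlinarith [hds, hdn]
  · intro h
    refine ⟨hd, ?_⟩
    nlinarith [hds, hdn]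

lemma mem_Dge_iff {q : Pt} {s : ℝ} (hs : 0 < s) {d : XX} (hd : d ∈ Ddisks) :
    d ∈ Dge q s ↔ (d ∈ Gset (wa s) ∨ d ∈ Gset (wb q s)) := by
  have hds := dist_sq d.1 q
  have hdn : 0 ≤ dist d.1 q := dist_nonneg
  have hr : 0 ≤ d.2 := hd
  simp only [Dge, Gset, Set.mem_setOf_eq, Fin.sum_univ_five, wa, wb, phi,
    Matrix.cons_val_zero, Matrix.cons_val_one, Matrix.head_cons, Matrix.cons_val_two,
    Matrix.tail_cons, Matrix.cons_val_three, Matrix.cons_val_four]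
  constructor
  · rintro ⟨-, h⟩
    rcases le_or_gt s d.2 with h' | h'
    · left; linarith
    · right; nlinarith [hds, hdn]
  · rintro (h | h)
    · exact ⟨hd, by linarith⟩
    · refine ⟨hd, ?_⟩
      nlinarith [hds, hdn]

/-- key: no 6 points can be shattered by a family of traces of `Gset`s. -/
lemma card_le_five_of_shatters (Yf : Finset XX) (𝒜 : Finset (Finset XX))
    (h𝒜 : ∀ a ∈ 𝒜, a ⊆ Yf ∧ ∃ w, ∀ x ∈ Yf, (x ∈ a ↔ x ∈ Gset w))
    (s : Finset XX) (hs : 𝒜.Shatters s) : s.card ≤ 5 := by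
  by_contra hcard
  push_neg at hcard
  obtain ⟨s', hs'sub, hs'card⟩ := s.exists_subset_card_eq (by omega : 6 ≤ s.card)
  have hs' : 𝒜.Shatters s' := hs.mono_right hs'sub
  have hsY : s' ⊆ Yf := by
    obtain ⟨t, ht, hst⟩ := hs'.exists_superset
    exact hst.trans (h𝒜 t ht).1
  have e := s'.equivFinOfCardEq hs'card
  set v : Fin 6 → XX := fun i => (e.symm i : XX) with hv
  have hvinj : Function.Injective v :=
    Subtype.coe_injective.comp e.symm.injective
  have hvmem : ∀ i, v i ∈ s' := fun i => (e.symm i).2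
  have key : ∀ g : Fin 6 → ℝ, (∑ i, g i • phi (v i)) = 0 → (∃ i, 0 < g i) → False := by
    intro g hg0 ⟨i₀, hi₀⟩
    set t : Finset XX := (univ.filter (fun i => ¬ 0 < g i)).image v with httdef
    have htsub : t ⊆ s' := by
      intro x hx
      simp only [t, mem_image] at hx
      obtain ⟨j, -, rfl⟩ := hx
      exact hvmem j
    obtain ⟨a, ha, hat⟩ := hs' htsub
    obtain ⟨-, w, hw⟩ := h𝒜 a ha
    have hsign : ∀ i, (0 < g i ↔ ¬ (∑ j, w j * phi (v i) j ≤ 0)) := by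
      intro i
      have h1 : v i ∈ a ↔ v i ∈ t := by
        constructor
        · intro h; rw [← hat]; exact mem_inter.2 ⟨hvmem i, h⟩
        · intro h; rw [← hat] at h; exact (mem_inter.1 h).2
      have h2 : v i ∈ t ↔ ¬ 0 < g i := by
        simp only [t, mem_image, mem_filter, mem_univ, true_and]
        constructor
        · rintro ⟨j, hj, hji⟩; rwa [← hvinj hji]
        · intro h; exact ⟨i, h, rfl⟩
      have h3 : v i ∈ a ↔ v i ∈ Gset w := hw _ (hsY (hvmem i))
      have : (∑ j, w j * phi (v i) j ≤ 0) ↔ ¬ 0 < g i := by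
        rw [show (∑ j, w j * phi (v i) j ≤ 0) ↔ v i ∈ Gset w from Iff.rfl, ← h3, h1, h2]
      tauto
    have hzero : ∀ j, ∑ i, g i * phi (v i) j = 0 := by
      intro j
      have := congrFun hg0 j
      simpa [Finset.sum_apply] using this
    have hsum : ∑ i, g i * (∑ j, w j * phi (v i) j) = 0 := by
      have : ∑ i, g i * (∑ j, w j * phi (v i) j)
          = ∑ j, w j * (∑ i, g i * phi (v i) j) := by
        simp_rw [Finset.mul_sum]
        rw [Finset.sum_comm]
        congr 1; ext i; congr 1; ext j; ring
      rw [this]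
      simp [hzero]
    have hpos : 0 < ∑ i, g i * (∑ j, w j * phi (v i) j) := by
      apply Finset.sum_pos'
      · intro i _
        by_cases h : 0 < g i
        · have := (hsign i).1 h
          push_neg at this
          positivity
        · have hg : g i ≤ 0 := not_lt.1 h
          have hd : ∑ j, w j * phi (v i) j ≤ 0 := by
            by_contra hc
            exact h ((hsign i).2 hc)
          nlinarith [mul_nonneg (neg_nonneg.2 hg) (neg_nonneg.2 hd)]
      · refine ⟨i₀, mem_univ _, ?_⟩
        have := (hsign i₀).1 hi₀
        push_neg at this
        positivity
    linarith
  have hnli : ¬ LinearIndependent ℝ (fun i => phi (v i)) := by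
    intro h
    have := h.fintype_card_le_finrank
    simp [Module.finrank_pi] at this
  obtain ⟨g, hg0, i₀, hi₀⟩ := Fintype.not_linearIndependent_iff.1 hnli
  rcases Ne.lt_or_gt hi₀ with h | h
  · exact key (-g) (by simpa using hg0) ⟨i₀, by simpa using h⟩
  · exact key g hg0 ⟨i₀, h⟩

/-- the trace of a set on a finite ground set. -/
def traceS (Yf : Finset XX) (f : Set XX) : Finset XX := Yf.filter (· ∈ f)

/-- traces of the linear threshold sets on `Yf`. -/
def Afam (Yf : Finset XX) : Finset (Finset XX) :=
  Yf.powerset.filter (fun a => ∃ w, a = traceS Yf (Gset w))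

lemma traceS_mem_Afam (Yf : Finset XX) (w : Fin 5 → ℝ) : traceS Yf (Gset w) ∈ Afam Yf := by
  simp only [Afam, mem_filter, mem_powerset]
  exact ⟨filter_subset _ _, w, rfl⟩

lemma card_Afam_le (Yf : Finset XX) : (Afam Yf).card ≤ 6 * (Yf.card + 1) ^ 5 := by
  have h𝒜 : ∀ a ∈ Afam Yf, a ⊆ Yf ∧ ∃ w, ∀ x ∈ Yf, (x ∈ a ↔ x ∈ Gset w) := by
    intro a ha
    simp only [Afam, mem_filter, mem_powerset] at ha
    obtain ⟨hsub, w, rfl⟩ := ha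
    exact ⟨filter_subset _ _, w, fun x hx => by simp [traceS, hx]⟩
  calc (Afam Yf).card ≤ (Afam Yf).shatterer.card := Finset.card_le_card_shatterer _
    _ ≤ ((Finset.range 6).biUnion (fun i => Yf.powersetCard i)).card := by
        apply Finset.card_le_card
        intro s hs
        rw [Finset.mem_shatterer] at hs
        have hcard : s.card ≤ 5 := card_le_five_of_shatters Yf _ h𝒜 s hs
        have hsub : s ⊆ Yf := by
          obtain ⟨t, ht, hst⟩ := hs.exists_superset
          exact hst.trans (h𝒜 t ht).1
        simp only [Finset.mem_biUnion, Finset.mem_range, Finset.mem_powersetCard]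
        exact ⟨s.card, by omega, hsub, rfl⟩
    _ ≤ ∑ i ∈ Finset.range 6, (Yf.powersetCard i).card := Finset.card_biUnion_le
    _ ≤ ∑ i ∈ Finset.range 6, (Yf.card + 1) ^ 5 := by
        apply Finset.sum_le_sum
        intro i hi
        rw [Finset.card_powersetCard]
        calc Yf.card.choose i ≤ Yf.card ^ i := Nat.choose_le_pow Yf.card i
          _ ≤ (Yf.card + 1) ^ i := Nat.pow_le_pow_left (by omega) i
          _ ≤ (Yf.card + 1) ^ 5 := Nat.pow_le_pow_right (by omega) (by
              simp only [Finset.mem_range] at hi; omega)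
    _ = 6 * (Yf.card + 1) ^ 5 := by simp [Finset.sum_const]

/-- traces of the base family on `Yf`. -/
def Bfam (Yf : Finset XX) : Finset (Finset XX) :=
  Yf.powerset.filter (fun b => ∃ f ∈ Hle ∪ Hge ∪ Heq, b = traceS Yf f)

/-- combination map realizing each base classifier from at most three threshold traces. -/
def combo : (Finset XX × Finset XX × Finset XX) × Fin 3 → Finset XX :=
  fun p => match p.2 with
    | 0 => p.1.1
    | 1 => p.1.2.1 ∪ p.1.2.2
    | 2 => p.1.1 ∩ (p.1.2.1 ∪ p.1.2.2)

lemma card_Bfam_le (Yf : Finset XX) (hY : (Yf : Set XX) ⊆ Ddisks) :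
    (Bfam Yf).card ≤ 3 * (Afam Yf).card ^ 3 := by
  have hsub : Bfam Yf ⊆ (((Afam Yf ×ˢ (Afam Yf ×ˢ Afam Yf)) ×ˢ (univ : Finset (Fin 3))).image combo) := by
    intro b hb
    simp only [Bfam, mem_filter, mem_powerset] at hb
    obtain ⟨-, f, hf, rfl⟩ := hb
    rw [Finset.mem_image]
    have hDle : ∀ q s, 0 < s → traceS Yf (Dle q s) = traceS Yf (Gset (wle q s)) := by
      intro q s hs
      apply Finset.filter_congr
      intro x hx
      simpa using mem_Dle_iff hs (hY hx)
    have hDge : ∀ q s, 0 < s →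
        traceS Yf (Dge q s) = traceS Yf (Gset (wa s)) ∪ traceS Yf (Gset (wb q s)) := by
      intro q s hs
      rw [traceS, traceS, traceS, ← Finset.filter_or]
      apply Finset.filter_congr
      intro x hx
      simpa using mem_Dge_iff hs (hY hx)
    rcases hf with (hf | hf) | hf
    · obtain ⟨q, s, hs, rfl⟩ := hf
      refine ⟨((traceS Yf (Gset (wle q s)), traceS Yf (Gset (wa s)), traceS Yf (Gset (wb q s))), 0), ?_, ?_⟩
      · simp [Finset.mem_product, traceS_mem_Afam]
      · simp only [combo]
        exact (hDle q s hs).symm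
    · obtain ⟨q, s, hs, rfl⟩ := hf
      refine ⟨((traceS Yf (Gset (wle q s)), traceS Yf (Gset (wa s)), traceS Yf (Gset (wb q s))), 1), ?_, ?_⟩
      · simp [Finset.mem_product, traceS_mem_Afam]
      · simp only [combo]
        exact (hDge q s hs).symm
    · obtain ⟨q, s, hs, rfl⟩ := hf
      refine ⟨((traceS Yf (Gset (wle q s)), traceS Yf (Gset (wa s)), traceS Yf (Gset (wb q s))), 2), ?_, ?_⟩
      · simp [Finset.mem_product, traceS_mem_Afam]
      · simp only [combo]
        rw [← hDle q s hs, ← hDge q s hs]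
        ext x
        simp only [traceS, Deq, Finset.mem_inter, Finset.mem_filter, Set.mem_inter_iff]
        tauto

  calc (Bfam Yf).card ≤ _ := Finset.card_le_card hsub
    _ ≤ ((Afam Yf ×ˢ (Afam Yf ×ˢ Afam Yf)) ×ˢ (univ : Finset (Fin 3))).card :=
        Finset.card_image_le
    _ = 3 * (Afam Yf).card ^ 3 := by
        simp [Finset.card_product]
        ring

/-- counting: shattering by `l`-fold intersections bounds `2^n`. -/
lemma pow_card_le (Yf : Finset XX) (hY : (Yf : Set XX) ⊆ Ddisks) (l : ℕ)
    (hsh : Shatters (InterFamily (Hle ∪ Hge ∪ Heq) l) (Yf : Set XX)) :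
    2 ^ Yf.card ≤ (Bfam Yf).card ^ l := by
  have hex : ∀ S : {S // S ∈ Yf.powerset}, ∃ t : Fin l → Finset XX,
      (∀ i, t i ∈ Bfam Yf) ∧ (S : Finset XX) = Yf.filter (fun x => ∀ i, x ∈ t i) := by
    rintro ⟨S, hS⟩
    rw [mem_powerset] at hS
    obtain ⟨f, hf, hfY⟩ := hsh (S : Set XX) (by exact_mod_cast hS)
    obtain ⟨g, hg, rfl⟩ := hf
    refine ⟨fun i => traceS Yf (g i), fun i => ?_, ?_⟩
    · simp only [Bfam, mem_filter, mem_powerset]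
      exact ⟨filter_subset _ _, g i, hg i, rfl⟩
    · ext x
      have hx := Set.ext_iff.1 hfY x
      simp only [Set.mem_inter_iff, Set.mem_iInter, Finset.mem_coe] at hx
      simp only [Finset.mem_filter, traceS]
      constructor
      · intro hxS
        have h' := hx.2 hxS
        exact ⟨hS hxS, fun i => ⟨hS hxS, h'.1 i⟩⟩
      · rintro ⟨hxY, ht⟩
        exact hx.1 ⟨fun i => (ht i).2, hxY⟩
  choose t ht1 ht2 using hex
  have hinj : Function.Injective (fun S : {S // S ∈ Yf.powerset} =>
      (fun i => (⟨t S i, ht1 S i⟩ : {b // b ∈ Bfam Yf}))) := by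
    intro S S' hSS
    have : t S = t S' := by
      funext i
      exact congrArg Subtype.val (congrFun hSS i)
    apply Subtype.ext
    rw [ht2 S, ht2 S', this]
  have hcard := Fintype.card_le_of_injective _ hinj
  simpa [Fintype.card_coe, Fintype.card_fun] using hcard

/-- arithmetic endgame. -/
lemma real_final {x L : ℝ} (hx : 0 ≤ x) (hL : 1 ≤ L)
    (h : x * Real.log 2 ≤ 25 * L * Real.log (x + 1)) :
    x ≤ 10000 * L * Real.log (L + 1) := by
  have h2 : (0.6931471803 : ℝ) < Real.log 2 := Real.log_two_gt_d9
  have h2' : Real.log 2 ≤ 1 := by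
    have := Real.log_le_sub_one_of_pos (by norm_num : (0:ℝ) < 2); linarith
  set A : ℝ := 25 * L / Real.log 2 with hA
  have hApos : 0 < A := by positivity
  have hA1 : 25 ≤ A := by
    rw [hA, le_div_iff₀ (by linarith)]
    nlinarith
  have hx1 : x ≤ A * Real.log (x + 1) := by
    rw [hA, div_mul_eq_mul_div, le_div_iff₀ (by linarith)]
    linarith
  have hlog1 : Real.log (x + 1) ≤ Real.log (2 * A) + (x + 1) / (2 * A) - 1 := by
    have hq : (0:ℝ) < (x + 1) / (2 * A) := by positivity
    have := Real.log_le_sub_one_of_pos hq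
    have hdiv : Real.log ((x + 1) / (2 * A)) = Real.log (x + 1) - Real.log (2 * A) :=
      Real.log_div (by linarith) (by positivity)
    rw [hdiv] at this
    linarith
  have hx2 : x ≤ 2 * A * Real.log (2 * A) := by
    have : x ≤ A * Real.log (2 * A) + (x + 1) / 2 - A := by
      calc x ≤ A * (Real.log (2 * A) + (x + 1) / (2 * A) - 1) := by
              refine hx1.trans ?_
              exact mul_le_mul_of_nonneg_left hlog1 (le_of_lt hApos)
        _ = A * Real.log (2 * A) + (x + 1) / 2 - A := by
              field_simp
    linarith
  have h2A : 2 * A ≤ 73 * L := by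
    rw [hA]
    rw [show (2:ℝ) * (25 * L / Real.log 2) = 50 * L / Real.log 2 by ring,
      div_le_iff₀ (by linarith)]
    nlinarith
  have hlog2A : Real.log (2 * A) ≤ 105 * Real.log (L + 1) := by
    have hm : Real.log (2 * A) ≤ Real.log (73 * L) :=
      Real.log_le_log (by positivity) h2A
    have hmul : Real.log (73 * L) = Real.log 73 + Real.log L :=
      Real.log_mul (by norm_num) (by linarith)
    have h73 : Real.log 73 ≤ 72 := by
      have := Real.log_le_sub_one_of_pos (by norm_num : (0:ℝ) < 73); linarith
    have hLL : Real.log L ≤ Real.log (L + 1) := Real.log_le_log (by linarith) (by linarith)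
    have hgeL : Real.log 2 ≤ Real.log (L + 1) := Real.log_le_log (by norm_num) (by linarith)
    have h72 : (72 : ℝ) ≤ 104 * Real.log 2 := by linarith
    calc Real.log (2 * A) ≤ Real.log 73 + Real.log L := by rw [← hmul]; exact hm
      _ ≤ 72 + Real.log (L + 1) := by linarith
      _ ≤ 104 * Real.log (L + 1) + Real.log (L + 1) := by linarith
      _ = 105 * Real.log (L + 1) := by ring
  have hend : 2 * A * Real.log (2 * A) ≤ (73 * L) * (105 * Real.log (L + 1)) := by
    apply mul_le_mul h2A hlog2A ?_ (by positivity)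
    have : Real.log 1 ≤ Real.log (2 * A) := Real.log_le_log (by norm_num) (by linarith)
    simpa using this
  have hLpos : 0 < Real.log (L + 1) := Real.log_pos (by linarith)
  nlinarith [hx2, hend, hLpos]

end VCAux

open VCAux in
/-- There is a constant `C > 0` such that for every `l ≥ 1`, every
finite set of closed disks shattered by
`H_l = {f₁ ∩ ⋯ ∩ f_l : f₁, …, f_l ∈ H_≤ ∪ H_≥ ∪ H_=}` has cardinality at most
`C · l · log (l + 1)`; i.e. `(𝒟, H_l)` has VC dimension `O(l log l)`. -/
theorem vc_dim_inter_family_with_eq :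
    ∃ C : ℝ, 0 < C ∧ ∀ l : ℕ, 1 ≤ l →
      ∀ Y ⊆ Ddisks, Y.Finite → Shatters (InterFamily (Hle ∪ Hge ∪ Heq) l) Y →
        (Y.ncard : ℝ) ≤ C * l * Real.log (l + 1) := by
  refine ⟨10000, by norm_num, ?_⟩
  intro l hl Y hY hfin hsh
  classical
  set Yf := hfin.toFinset with hYf
  have hcoe : (Yf : Set _) = Y := hfin.coe_toFinset
  have hncard : Y.ncard = Yf.card := by
    rw [← hcoe]
    simp [Set.ncard_coe_finset]
  set n := Yf.card with hn
  have hYD : (Yf : Set _) ⊆ Ddisks := by rw [hcoe]; exact hY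
  have hsh' : Shatters (InterFamily (Hle ∪ Hge ∪ Heq) l) (Yf : Set _) := by
    rw [hcoe]; exact hsh
  have h1 : 2 ^ n ≤ (Bfam Yf).card ^ l := pow_card_le Yf hYD l hsh'
  have h2 : (Bfam Yf).card ≤ 3 * (6 * (n + 1) ^ 5) ^ 3 := by
    calc (Bfam Yf).card ≤ 3 * (Afam Yf).card ^ 3 := card_Bfam_le Yf hYD
      _ ≤ 3 * (6 * (n + 1) ^ 5) ^ 3 := by
          have := card_Afam_le Yf
          gcongr
  rw [hncard]
  -- dispose of the case n = 0
  rcases Nat.eq_zero_or_pos n with hn0 | hnpos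
  · rw [hn0]
    have : (0:ℝ) < Real.log (l + 1) := Real.log_pos (by
      have : (1:ℝ) ≤ l := by exact_mod_cast hl
      linarith)
    push_cast
    positivity
  -- n ≥ 1 : combine counting bounds
  have h3 : 2 ^ n ≤ (n + 1) ^ (25 * l) := by
    have e1 : (3 * (6 * (n + 1) ^ 5) ^ 3) = 648 * (n + 1) ^ 15 := by ring
    have e2 : (648 : ℕ) ≤ (n + 1) ^ 10 :=
      le_trans (show (648:ℕ) ≤ 2 ^ 10 by norm_num)
        (Nat.pow_le_pow_left (show 2 ≤ n + 1 by omega) 10)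
    calc 2 ^ n ≤ (Bfam Yf).card ^ l := h1
      _ ≤ (3 * (6 * (n + 1) ^ 5) ^ 3) ^ l := Nat.pow_le_pow_left h2 l
      _ = (648 * (n + 1) ^ 15) ^ l := by rw [e1]
      _ ≤ ((n + 1) ^ 10 * (n + 1) ^ 15) ^ l :=
          Nat.pow_le_pow_left (Nat.mul_le_mul e2 (le_refl _)) l
      _ = ((n + 1) ^ 25) ^ l := by rw [← pow_add]
      _ = (n + 1) ^ (25 * l) := by rw [← pow_mul]
  have h4 : (n : ℝ) * Real.log 2 ≤ 25 * l * Real.log (n + 1) := by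
    have hcast : ((2:ℝ)) ^ n ≤ ((n:ℝ) + 1) ^ (25 * l) := by
      exact_mod_cast h3
    have := Real.log_le_log (by positivity) hcast
    rw [Real.log_pow, Real.log_pow] at this
    push_cast at this
    push_cast
    linarith
  have hL1 : (1:ℝ) ≤ (l:ℝ) := by exact_mod_cast hl
  have := real_final (x := (n:ℝ)) (L := (l:ℝ)) (by positivity) hL1 (by push_cast at h4 ⊢; linarith)
  push_cast at this ⊢
  linarith
end
end
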